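/- Let G be a group and let E be a complex elliptic curve (or more generally, a divisible abelian group A in which the equation 2P = 0 has a nonzero solution). Define τ : A^G → A^G by τ(c)(g) = 2·c(g). Then τ is post-surjective but not pre-injective. Precisely: (1) for any x, y ∈ A^G with y asymptotic to τ(x), there exists z ∈ A^G asymptotic to x with τ(z) = y; (2) there exist distinct asymptotic configurations c, d ∈ A^G with τ(c) = τ(d). -/
import Mathlib


/-- Let `A` be a divisible abelian group (doubling is surjective) with a nonzero
`2`-torsion element, e.g. the points of a complex elliptic curve. The cellular
automaton `τ : A^G → A^G`, `τ(c)(g) = 2·c(g)`, is post-surjective but not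
pre-injective. -/
theorem doubling_postSurjective_not_preInjective (G A : Type*) [Group G] [AddCommGroup A]
    (hdiv : Function.Surjective fun a : A => (2 : ℤ) • a)
    (htor : ∃ P : A, P ≠ 0 ∧ (2 : ℤ) • P = 0)
    (τ : (G → A) → (G → A)) (hτ : ∀ (c : G → A) (g : G), τ c g = (2 : ℤ) • c g) :
    (∀ x y : G → A, {g | y g ≠ τ x g}.Finite →
        ∃ z : G → A, {g | z g ≠ x g}.Finite ∧ τ z = y) ∧
    ∃ c d : G → A, c ≠ d ∧ {g | c g ≠ d g}.Finite ∧ τ c = τ d := by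
  classical
  constructor
  · intro x y hfin
    choose f hf using hdiv
    refine ⟨fun g => if y g = τ x g then x g else f (y g), ?_, ?_⟩
    · apply hfin.subset
      intro g hg
      simp only [Set.mem_setOf_eq] at hg ⊢
      intro h
      rw [if_pos h] at hg
      exact hg rfl
    · funext g
      rw [hτ]
      by_cases h : y g = τ x g
      · simp [h, ← hτ x g, h]
      · simpa [h] using hf (y g)
  · obtain ⟨P, hP, hP2⟩ := htor
    refine ⟨0, fun g => if g = 1 then P else 0, ?_, ?_, ?_⟩
    · intro h
      apply hP
      have := congrFun h 1
      simpa using this.symm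
    · apply Set.Finite.subset (Set.finite_singleton (1 : G))
      intro g hg
      simp only [Set.mem_setOf_eq] at hg
      by_contra h
      simp [Set.mem_singleton_iff] at h
      exact hg (by simp [h])
    · funext g
      rw [hτ, hτ]
      by_cases h : g = 1 <;> simp [h, hP2]
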